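/- Let E be a (possibly uncountable) directed graph and K a field, with Leavitt path algebra L_K(E) generated by a Leavitt E-family {p_v, t_e, t_e^*}. Then there is a well-defined monoid homomorphism γ_E from the graph monoid M̄_E to V[L_K(E)] sending the generator a_v to [p_v] for each vertex v, and sending a_{v,S} to [p_v − Σ_{e∈S} t_e t_e^*] for each infinite emitter v and non-empty finite subset S of edges emitted by v. -/

import Mathlib

open Matrix

/-- Square matrices of size `n` over `R`, the building blocks of `M_∞(R)`. -/
abbrev Mat (R : Type) [NonUnitalRing R] (n : ℕ) : Type := Matrix (Fin n) (Fin n) R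

/-- The embedding `M_n(R) ⊆ M_N(R)`, `a ↦ a ⊕ 0`, realizing `M_∞(R) = ⋃ₙ M_n(R)`. -/
def pad {R : Type} [NonUnitalRing R] {n : ℕ} (N : ℕ) (a : Mat R n) : Mat R N :=
  Matrix.of fun i j =>
    if h : (i : ℕ) < n ∧ (j : ℕ) < n then a ⟨i, h.1⟩ ⟨j, h.2⟩ else 0

/-- Block-diagonal direct sum `a ⊕ b` of square matrices. -/
def dsum {R : Type} [NonUnitalRing R] {n m : ℕ} (a : Mat R n) (b : Mat R m) :
    Mat R (n + m) :=
  Matrix.reindex finSumFinEquiv finSumFinEquiv (Matrix.fromBlocks a 0 0 b)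

/-- Murray–von Neumann equivalence in `M_∞(R)`: `a ~ b` iff after embedding in a common
`M_N(R)` there are `x, y` with `a = x*y` and `b = y*x`. -/
def MvN {R : Type} [NonUnitalRing R] {n m : ℕ} (a : Mat R n) (b : Mat R m) : Prop :=
  ∃ N, n ≤ N ∧ m ≤ N ∧ ∃ x y : Mat R N, pad N a = x * y ∧ pad N b = y * x

/-- An idempotent element of `M_∞(R)`: an idempotent `n × n` matrix for some `n`. -/
def IdemMat (R : Type) [NonUnitalRing R] : Type :=
  Σ n : ℕ, {a : Mat R n // IsIdempotentElem a}

/-- The defining relations of the monoid `V[R]` on the free commutative monoid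
(`Multiset`) on the idempotent matrices: equivalent idempotents are identified,
`[a] + [b] = [a ⊕ b]`, and `[0] = 0`. -/
inductive VRel (R : Type) [NonUnitalRing R] :
    Multiset (IdemMat R) → Multiset (IdemMat R) → Prop
  | equiv (a b : IdemMat R) : MvN a.2.1 b.2.1 → VRel R {a} {b}
  | add (a b c : IdemMat R) : c.1 = a.1 + b.1 → HEq c.2.1 (dsum a.2.1 b.2.1) →
      VRel R ({a} + {b}) {c}
  | zero (c : IdemMat R) : c.2.1 = (0 : Mat R c.1) → VRel R {c} 0

/-- The monoid `V[R]` of Murray–von Neumann equivalence classes of idempotent matrices. -/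
def VMon (R : Type) [NonUnitalRing R] : Type := (addConGen (VRel R)).Quotient

noncomputable instance (R : Type) [NonUnitalRing R] : AddCommMonoid (VMon R) := by
  unfold VMon; infer_instance

/-- The class `[a] ∈ V[R]` of an idempotent matrix. -/
def cls {R : Type} [NonUnitalRing R] (a : IdemMat R) : VMon R :=
  (addConGen (VRel R)).mk' {a}

open Classical in
/-- The class in `V[R]` of an idempotent ring element, viewed as a `1 × 1` matrix
(junk value `0` if the element is not idempotent). -/
noncomputable def clsE {R : Type} [NonUnitalRing R] (a : R) : VMon R :=
  if h : IsIdempotentElem (Matrix.of fun _ _ : Fin 1 => a) then cls ⟨1, _, h⟩ else 0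

attribute [local instance] Classical.propDecidable

/-- A directed graph: vertices, edges, and source/range maps. -/
structure DGraph where
  V : Type
  E : Type
  s : E → V
  r : E → V

namespace DGraph

/-- The set of edges emitted by a vertex. -/
def emit (G : DGraph) (v : G.V) : Set G.E := {e | G.s e = v}

/-- A regular vertex: emits a nonzero finite number of edges. -/
def Regular (G : DGraph) (v : G.V) : Prop := (G.emit v).Finite ∧ (G.emit v).Nonempty

/-- An infinite emitter: emits infinitely many edges. -/
def InfEmitter (G : DGraph) (v : G.V) : Prop := (G.emit v).Infinite

end DGraph

/-- The extra generators `a_{v,S}` of the graph monoid: `v` an infinite emitter and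
`S` a finite non-empty subset of `s⁻¹(v)`. -/
def InfGen (G : DGraph) : Type :=
  {x : G.V × Finset G.E // G.InfEmitter x.1 ∧ x.2.Nonempty ∧ ∀ e ∈ x.2, G.s e = x.1}

/-- The generators of the graph monoid `M̄_E`: one generator `a_v` per vertex, and one
generator `a_{v,S}` per infinite emitter `v` and finite non-empty `S ⊆ s⁻¹(v)`. -/
abbrev MGen (G : DGraph) : Type := G.V ⊕ InfGen G

/-- The defining relations of the graph monoid `M̄_E` on the free commutative monoid
(`Multiset`) on the generators. -/
inductive MRel (G : DGraph) : Multiset (MGen G) → Multiset (MGen G) → Prop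
  | reg (v : G.V) (h : (G.emit v).Finite) (hne : (G.emit v).Nonempty) :
      MRel G {Sum.inl v} (h.toFinset.val.map fun e => (Sum.inl (G.r e) : MGen G))
  | inf (x : InfGen G) :
      MRel G {Sum.inl x.1.1}
        ({Sum.inr x} + x.1.2.val.map fun e => (Sum.inl (G.r e) : MGen G))
  | exch (x y : InfGen G) : x.1.1 = y.1.1 →
      MRel G
        ({Sum.inr x} + ((x.1.2 \ y.1.2).val.map fun e => (Sum.inl (G.r e) : MGen G)))
        ({Sum.inr y} + ((y.1.2 \ x.1.2).val.map fun e => (Sum.inl (G.r e) : MGen G)))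

/-- The graph monoid `M̄_E` of a directed graph. -/
def Mbar (G : DGraph) : Type := (addConGen (MRel G)).Quotient

noncomputable instance (G : DGraph) : AddCommMonoid (Mbar G) := by
  unfold Mbar; infer_instance

/-- The generator `a_v` of `M̄_E`. -/
def genV (G : DGraph) (v : G.V) : Mbar G := (addConGen (MRel G)).mk' {Sum.inl v}

/-- The generator `a_{v,S}` of `M̄_E`. -/
def genS (G : DGraph) (x : InfGen G) : Mbar G := (addConGen (MRel G)).mk' {Sum.inr x}

/-- A Leavitt `E`-family in a ring `A`: idempotents `p_v` and elements `t_e, t'_e`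
satisfying the defining relations of the Leavitt path algebra. -/
structure LeavittFamily (G : DGraph) (A : Type) [NonUnitalRing A] where
  p : G.V → A
  t : G.E → A
  t' : G.E → A
  p_idem : ∀ v, p v * p v = p v
  p_orth : ∀ v w, v ≠ w → p v * p w = 0
  s_t : ∀ e, p (G.s e) * t e = t e
  t_r : ∀ e, t e * p (G.r e) = t e
  r_t' : ∀ e, p (G.r e) * t' e = t' e
  t'_s : ∀ e, t' e * p (G.s e) = t' e
  t'_t : ∀ e, t' e * t e = p (G.r e)
  t'_t_orth : ∀ e f, e ≠ f → t' e * t f = 0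
  reg : ∀ v (h : (G.emit v).Finite), (G.emit v).Nonempty →
      p v = ∑ e ∈ h.toFinset, t e * t' e

section VmonAux

variable {R : Type} [NonUnitalRing R]

lemma pad_self {n : ℕ} (a : Mat R n) : pad n a = a := by
  ext i j
  simp [pad, i.isLt, j.isLt]

lemma one_one_mul (a b : R) :
    (Matrix.of fun _ _ : Fin 1 => a) * (Matrix.of fun _ _ : Fin 1 => b)
      = Matrix.of fun _ _ : Fin 1 => a * b := by
  ext i j
  simp [Matrix.mul_apply]

lemma one_one_idem {a : R} (h : IsIdempotentElem a) :
    IsIdempotentElem (Matrix.of fun _ _ : Fin 1 => a) := by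
  unfold IsIdempotentElem
  rw [one_one_mul, h]

lemma mk'_eq_of_vrel {x y : Multiset (IdemMat R)} (h : VRel R x y) :
    (addConGen (VRel R)).mk' x = (addConGen (VRel R)).mk' y :=
  (AddCon.eq _).2 (AddConGen.Rel.of _ _ h)

lemma clsE_of_idem {a : R} (h : IsIdempotentElem a) :
    clsE a = cls ⟨1, _, one_one_idem h⟩ := dif_pos _

lemma clsE_eq_of_mvn {a b x y : R} (ha : IsIdempotentElem a) (hb : IsIdempotentElem b)
    (hxy : a = x * y) (hyx : b = y * x) : clsE a = clsE b := by
  subst hxy; subst hyx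
  rw [clsE_of_idem ha, clsE_of_idem hb]
  apply mk'_eq_of_vrel
  exact VRel.equiv _ _ ⟨1, le_refl 1, le_refl 1,
    Matrix.of fun _ _ => x, Matrix.of fun _ _ => y,
    by rw [pad_self, one_one_mul], by rw [pad_self, one_one_mul]⟩

lemma clsE_zero : clsE (0 : R) = 0 := by
  have h0 : IsIdempotentElem (0 : R) := by unfold IsIdempotentElem; simp
  rw [clsE_of_idem h0]
  unfold cls
  exact (mk'_eq_of_vrel (VRel.zero _ (by ext i j; simp))).trans (map_zero _)

lemma idem_add_orth {a b : R} (ha : IsIdempotentElem a) (hb : IsIdempotentElem b)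
    (hab : a * b = 0) (hba : b * a = 0) : IsIdempotentElem (a + b) := by
  unfold IsIdempotentElem at *
  rw [add_mul, mul_add, mul_add, ha, hb, hab, hba, add_zero, zero_add]

lemma dsum_one_one (a b : R) :
    dsum (Matrix.of fun _ _ : Fin 1 => a) (Matrix.of fun _ _ : Fin 1 => b)
      = !![a, 0; 0, b] := by
  ext i j
  fin_cases i <;> fin_cases j <;>
    simp [dsum, Matrix.fromBlocks,
      show (finSumFinEquiv.symm (0 : Fin (1+1)) : Fin 1 ⊕ Fin 1) = Sum.inl 0 from rfl,
      show (finSumFinEquiv.symm (1 : Fin (1+1)) : Fin 1 ⊕ Fin 1) = Sum.inr 0 from rfl]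

lemma pad_two_one (a : R) :
    pad 2 (Matrix.of fun _ _ : Fin 1 => a) = !![a, 0; 0, 0] := by
  ext i j
  fin_cases i <;> fin_cases j <;> simp [pad]

lemma clsE_add_orth {a b : R} (ha : IsIdempotentElem a) (hb : IsIdempotentElem b)
    (hab : a * b = 0) (hba : b * a = 0) : clsE (a + b) = clsE a + clsE b := by
  have hsum := idem_add_orth ha hb hab hba
  have hc : IsIdempotentElem (!![a, 0; 0, b] : Mat R 2) := by
    unfold IsIdempotentElem
    ext i j
    fin_cases i <;> fin_cases j <;>
      simp [Matrix.mul_apply, Fin.sum_univ_two, ha.eq, hb.eq]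
  rw [clsE_of_idem ha, clsE_of_idem hb, clsE_of_idem hsum]
  have step1 : cls (⟨1, _, one_one_idem ha⟩ : IdemMat R) + cls ⟨1, _, one_one_idem hb⟩
      = cls ⟨2, _, hc⟩ := by
    unfold cls
    exact (map_add ((addConGen (VRel R)).mk') _ _).symm.trans
      (mk'_eq_of_vrel (VRel.add _ _ _ rfl (heq_of_eq (dsum_one_one a b).symm)))
  rw [step1]
  apply mk'_eq_of_vrel
  refine VRel.equiv _ _ ⟨2, by norm_num, by norm_num,
    !![a, b; 0, 0], !![a, 0; b, 0], ?_, ?_⟩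
  · rw [pad_two_one]
    ext i j
    fin_cases i <;> fin_cases j <;>
      simp [Matrix.mul_apply, Fin.sum_univ_two, ha.eq, hb.eq, hab, hba]
  · rw [pad_self]
    ext i j
    fin_cases i <;> fin_cases j <;>
      simp [Matrix.mul_apply, Fin.sum_univ_two, ha.eq, hb.eq, hab, hba]

lemma isIdem_sum {ι : Type} (s : Finset ι) (f : ι → R)
    (h1 : ∀ i ∈ s, IsIdempotentElem (f i))
    (h2 : ∀ i ∈ s, ∀ j ∈ s, i ≠ j → f i * f j = 0) :
    IsIdempotentElem (∑ i ∈ s, f i) := by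
  classical
  induction s using Finset.induction_on with
  | empty => simp [IsIdempotentElem]
  | @insert a s hnotmem ih =>
    rw [Finset.sum_insert hnotmem]
    refine idem_add_orth (h1 _ (Finset.mem_insert_self _ _))
      (ih (fun i hi => h1 i (Finset.mem_insert_of_mem hi))
        (fun i hi j hj => h2 i (Finset.mem_insert_of_mem hi) j (Finset.mem_insert_of_mem hj)))
      ?_ ?_
    · rw [Finset.mul_sum]
      refine Finset.sum_eq_zero fun i hi => h2 a (Finset.mem_insert_self _ _) i
        (Finset.mem_insert_of_mem hi) (fun h => hnotmem (h ▸ hi))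
    · rw [Finset.sum_mul]
      refine Finset.sum_eq_zero fun i hi => h2 i (Finset.mem_insert_of_mem hi) a
        (Finset.mem_insert_self _ _) (fun h => hnotmem (h ▸ hi))

lemma clsE_sum {ι : Type} (s : Finset ι) (f : ι → R)
    (h1 : ∀ i ∈ s, IsIdempotentElem (f i))
    (h2 : ∀ i ∈ s, ∀ j ∈ s, i ≠ j → f i * f j = 0) :
    clsE (∑ i ∈ s, f i) = ∑ i ∈ s, clsE (f i) := by
  classical
  induction s using Finset.induction_on with
  | empty => simpa using clsE_zero
  | @insert a s hnotmem ih =>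
    rw [Finset.sum_insert hnotmem, Finset.sum_insert hnotmem]
    have h1' : ∀ i ∈ s, IsIdempotentElem (f i) := fun i hi => h1 i (Finset.mem_insert_of_mem hi)
    have h2' : ∀ i ∈ s, ∀ j ∈ s, i ≠ j → f i * f j = 0 :=
      fun i hi j hj => h2 i (Finset.mem_insert_of_mem hi) j (Finset.mem_insert_of_mem hj)
    rw [clsE_add_orth (h1 _ (Finset.mem_insert_self _ _)) (isIdem_sum s f h1' h2')
      (by rw [Finset.mul_sum]
          exact Finset.sum_eq_zero fun i hi => h2 a (Finset.mem_insert_self _ _) i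
            (Finset.mem_insert_of_mem hi) (fun h => hnotmem (h ▸ hi)))
      (by rw [Finset.sum_mul]
          exact Finset.sum_eq_zero fun i hi => h2 i (Finset.mem_insert_of_mem hi) a
            (Finset.mem_insert_self _ _) (fun h => hnotmem (h ▸ hi)))]
    rw [ih h1' h2']

end VmonAux

/-- Let `E` be a (possibly uncountable) directed graph and `K` a field,
with Leavitt path algebra `L_K(E)` generated by a Leavitt `E`-family `{p_v, t_e, t_e^*}`.
Then there is a well-defined monoid homomorphism `γ_E : M̄_E → V[L_K(E)]` sending the
generator `a_v` to `[p_v]` for each vertex `v`, and sending `a_{v,S}` to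
`[p_v − Σ_{e∈S} t_e t_e^*]` for each infinite emitter `v` and finite non-empty
`S ⊆ s⁻¹(v)`; in particular these elements are idempotents. -/
theorem gamma_monoid_hom_exists (K : Type) [Field K] (G : DGraph)
    (A : Type) [NonUnitalRing A] [Module K A] (L : LeavittFamily G A) :
    (∀ v : G.V, IsIdempotentElem (L.p v)) ∧
    (∀ x : InfGen G,
      IsIdempotentElem (L.p x.1.1 - ∑ e ∈ x.1.2, L.t e * L.t' e)) ∧
    ∃ γ : Mbar G →+ VMon A,
      (∀ v : G.V, γ (genV G v) = clsE (L.p v)) ∧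
      (∀ x : InfGen G,
        γ (genS G x) = clsE (L.p x.1.1 - ∑ e ∈ x.1.2, L.t e * L.t' e)) := by
  classical
  -- basic facts about the idempotents `t e * t' e`
  have hfidem : ∀ e : G.E, IsIdempotentElem (L.t e * L.t' e) := by
    intro e
    show (L.t e * L.t' e) * (L.t e * L.t' e) = L.t e * L.t' e
    rw [mul_assoc, ← mul_assoc (L.t' e), L.t'_t, ← mul_assoc, L.t_r]
  have hforth : ∀ e e' : G.E, e ≠ e' → (L.t e * L.t' e) * (L.t e' * L.t' e') = 0 := by
    intro e e' h
    rw [mul_assoc, ← mul_assoc (L.t' e), L.t'_t_orth e e' h, zero_mul, mul_zero]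
  have hfp : ∀ (v : G.V) (e : G.E), G.s e = v → L.p v * (L.t e * L.t' e) = L.t e * L.t' e := by
    intro v e he
    rw [← mul_assoc, ← he, L.s_t]
  have hpf : ∀ (v : G.V) (e : G.E), G.s e = v → (L.t e * L.t' e) * L.p v = L.t e * L.t' e := by
    intro v e he
    rw [mul_assoc, ← he, L.t'_s]
  have hsum_idem : ∀ S : Finset G.E, IsIdempotentElem (∑ e ∈ S, L.t e * L.t' e) :=
    fun S => isIdem_sum S _ (fun i _ => hfidem i) (fun i _ j _ hij => hforth i j hij)
  have hpsum : ∀ (v : G.V) (S : Finset G.E), (∀ e ∈ S, G.s e = v) →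
      L.p v * (∑ e ∈ S, L.t e * L.t' e) = ∑ e ∈ S, L.t e * L.t' e := by
    intro v S hS
    rw [Finset.mul_sum]
    exact Finset.sum_congr rfl fun e he => hfp v e (hS e he)
  have hsump : ∀ (v : G.V) (S : Finset G.E), (∀ e ∈ S, G.s e = v) →
      (∑ e ∈ S, L.t e * L.t' e) * L.p v = ∑ e ∈ S, L.t e * L.t' e := by
    intro v S hS
    rw [Finset.sum_mul]
    exact Finset.sum_congr rfl fun e he => hpf v e (hS e he)
  have hq : ∀ (v : G.V) (S : Finset G.E), (∀ e ∈ S, G.s e = v) →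
      IsIdempotentElem (L.p v - ∑ e ∈ S, L.t e * L.t' e) := by
    intro v S hS
    have expand : (L.p v - ∑ e ∈ S, L.t e * L.t' e) * (L.p v - ∑ e ∈ S, L.t e * L.t' e)
        = L.p v * L.p v - L.p v * (∑ e ∈ S, L.t e * L.t' e)
          - ((∑ e ∈ S, L.t e * L.t' e) * L.p v
            - (∑ e ∈ S, L.t e * L.t' e) * (∑ e ∈ S, L.t e * L.t' e)) := by
      noncomm_ring
    show _ = _
    rw [expand, L.p_idem, hpsum v S hS, hsump v S hS, (hsum_idem S).eq]
    abel
  have hqf : ∀ (v : G.V) (S : Finset G.E), (∀ e ∈ S, G.s e = v) → ∀ e ∈ S,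
      (L.p v - ∑ e' ∈ S, L.t e' * L.t' e') * (L.t e * L.t' e) = 0 := by
    intro v S hS e he
    rw [sub_mul, hfp v e (hS e he), Finset.sum_mul,
      Finset.sum_eq_single e (fun b _ hb => hforth b e hb) (fun h => absurd he h),
      (hfidem e).eq, sub_self]
  have hfq : ∀ (v : G.V) (S : Finset G.E), (∀ e ∈ S, G.s e = v) → ∀ e ∈ S,
      (L.t e * L.t' e) * (L.p v - ∑ e' ∈ S, L.t e' * L.t' e') = 0 := by
    intro v S hS e he
    rw [mul_sub, hpf v e (hS e he), Finset.mul_sum,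
      Finset.sum_eq_single e (fun b _ hb => hforth e b (Ne.symm hb)) (fun h => absurd he h),
      (hfidem e).eq, sub_self]
  have hfcls : ∀ e : G.E, clsE (L.t e * L.t' e) = clsE (L.p (G.r e)) := fun e =>
    clsE_eq_of_mvn (hfidem e) (L.p_idem (G.r e)) rfl (L.t'_t e).symm
  have hclssum : ∀ S : Finset G.E,
      clsE (∑ e ∈ S, L.t e * L.t' e) = ∑ e ∈ S, clsE (L.p (G.r e)) := by
    intro S
    rw [clsE_sum S _ (fun i _ => hfidem i) (fun i _ j _ hij => hforth i j hij)]
    exact Finset.sum_congr rfl fun e _ => hfcls e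
  refine ⟨fun v => L.p_idem v, fun x => hq x.1.1 x.1.2 x.2.2.2, ?_⟩
  -- the underlying map on generators and on the free commutative monoid
  set g : MGen G → VMon A := fun z => match z with
    | Sum.inl v => clsE (L.p v)
    | Sum.inr x => clsE (L.p x.1.1 - ∑ e ∈ x.1.2, L.t e * L.t' e) with hg
  set F : Multiset (MGen G) →+ VMon A :=
    { toFun := fun m => (m.map g).sum
      map_zero' := rfl
      map_add' := fun m n => by simp } with hF
  have hF_single : ∀ z : MGen G, F {z} = g z := by
    intro z
    show (Multiset.map g {z}).sum = g z
    simp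
  have hF_map : ∀ (S : Finset G.E),
      F (S.val.map fun e => (Sum.inl (G.r e) : MGen G)) = ∑ e ∈ S, clsE (L.p (G.r e)) := by
    intro S
    show ((S.val.map fun e => (Sum.inl (G.r e) : MGen G)).map g).sum = _
    rw [Multiset.map_map]
    rfl
  -- the three families of relations are preserved
  have key : ∀ a b, MRel G a b → F a = F b := by
    intro a b hab
    cases hab with
    | reg v h hne =>
      rw [hF_single, hF_map]
      show clsE (L.p v) = _
      rw [L.reg v h hne, hclssum]
    | inf x =>
      rw [hF_single, map_add, hF_single, hF_map]
      show clsE (L.p x.1.1)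
          = clsE (L.p x.1.1 - ∑ e ∈ x.1.2, L.t e * L.t' e)
            + ∑ e ∈ x.1.2, clsE (L.p (G.r e))
      obtain ⟨hinf, hne, hs⟩ := x.2
      have horth1 : (L.p x.1.1 - ∑ e ∈ x.1.2, L.t e * L.t' e)
          * (∑ e ∈ x.1.2, L.t e * L.t' e) = 0 := by
        rw [Finset.mul_sum]
        exact Finset.sum_eq_zero fun e he => hqf x.1.1 x.1.2 hs e he
      have horth2 : (∑ e ∈ x.1.2, L.t e * L.t' e)
          * (L.p x.1.1 - ∑ e ∈ x.1.2, L.t e * L.t' e) = 0 := by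
        rw [Finset.sum_mul]
        exact Finset.sum_eq_zero fun e he => hfq x.1.1 x.1.2 hs e he
      have hco := clsE_add_orth (hq x.1.1 x.1.2 hs) (hsum_idem x.1.2) horth1 horth2
      have hsub : (L.p x.1.1 - ∑ e ∈ x.1.2, L.t e * L.t' e)
          + ∑ e ∈ x.1.2, L.t e * L.t' e = L.p x.1.1 := by abel
      rw [hsub] at hco
      rw [hco, hclssum]
    | exch x y hvv =>
      rw [map_add, map_add, hF_single, hF_single, hF_map, hF_map]
      have side : ∀ (v : G.V) (S T : Finset G.E), (∀ e ∈ S, G.s e = v) →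
          clsE (L.p v - ∑ e ∈ S, L.t e * L.t' e)
            + ∑ e ∈ S \ T, clsE (L.p (G.r e))
          = clsE (L.p v - ∑ e ∈ S ∩ T, L.t e * L.t' e) := by
        intro v S T hS
        have hmem : ∀ e ∈ S \ T, e ∈ S := fun e he => (Finset.mem_sdiff.1 he).1
        have horth1 : (L.p v - ∑ e ∈ S, L.t e * L.t' e)
            * (∑ e ∈ S \ T, L.t e * L.t' e) = 0 := by
          rw [Finset.mul_sum]
          exact Finset.sum_eq_zero fun e he => hqf v S hS e (hmem e he)
        have horth2 : (∑ e ∈ S \ T, L.t e * L.t' e)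
            * (L.p v - ∑ e ∈ S, L.t e * L.t' e) = 0 := by
          rw [Finset.sum_mul]
          exact Finset.sum_eq_zero fun e he => hfq v S hS e (hmem e he)
        rw [← hclssum (S \ T),
          ← clsE_add_orth (hq v S hS) (hsum_idem (S \ T)) horth1 horth2]
        congr 1
        rw [← Finset.sum_inter_add_sum_sdiff S T fun e => L.t e * L.t' e]
        abel
      show clsE (L.p x.1.1 - ∑ e ∈ x.1.2, L.t e * L.t' e)
            + ∑ e ∈ x.1.2 \ y.1.2, clsE (L.p (G.r e))
          = clsE (L.p y.1.1 - ∑ e ∈ y.1.2, L.t e * L.t' e)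
            + ∑ e ∈ y.1.2 \ x.1.2, clsE (L.p (G.r e))
      rw [side x.1.1 x.1.2 y.1.2 x.2.2.2, side y.1.1 y.1.2 x.1.2 y.2.2.2, hvv,
        Finset.inter_comm]
  refine ⟨AddCon.lift _ F (AddCon.addConGen_le.2 fun a b hab =>
    (AddCon.ker_rel F).2 (key a b hab)), ?_, ?_⟩
  · intro v
    exact (AddCon.lift_mk' _ _).trans (hF_single (Sum.inl v))
  · intro x
    exact (AddCon.lift_mk' _ _).trans (hF_single (Sum.inr x))
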